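/- Let P be symmetric positive definite, x ∈ R^p, σ > 0, γ := x^T P x, s := γ + σ^2, k := P x/s, e ∈ R, and δ := k e. Then (1/2) δ^T (P^{-1} + (P^{-1} + x x^T/σ^2)) δ = (1/2)(e^2/s)(2γ + (γ/σ)^2)/s. -/

import Mathlib

open Matrix

/-- Symmetric KL divergence between Gaussian posteriors before and after a
rank-one Kalman update (Proposition 4). -/
theorem symmetric_kl_closed_form {p : ℕ} (P : Matrix (Fin p) (Fin p) ℝ)
    (hP : P.PosDef) (hPsymm : P.IsSymm) (x : Fin p → ℝ) (σ : ℝ) (hσ : 0 < σ)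
    (γ : ℝ) (hγ : γ = x ⬝ᵥ P.mulVec x)
    (s : ℝ) (hs : s = γ + σ^2)
    (k : Fin p → ℝ) (hk : k = s⁻¹ • P.mulVec x) (e : ℝ)
    (δ : Fin p → ℝ) (hδ : δ = e • k) :
    (1/2) * (δ ⬝ᵥ (P⁻¹ + (P⁻¹ + (σ^2)⁻¹ • Matrix.vecMulVec x x)).mulVec δ)
      = (1/2) * (e^2 / s) * (2 * γ + (γ / σ)^2) / s := by
  have hPinv : P⁻¹ * P = 1 := Matrix.nonsing_inv_mul P hP.det_pos.ne'.isUnit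
  set v := P.mulVec x with hv
  have h1 : P⁻¹.mulVec v = x := by
    rw [hv, Matrix.mulVec_mulVec, hPinv, Matrix.one_mulVec]
  have h2 : v ⬝ᵥ x = γ := by rw [dotProduct_comm, hγ]
  have h3 : x ⬝ᵥ v = γ := hγ.symm
  have hs0 : s ≠ 0 := by
    have : 0 ≤ γ := by rw [hγ]; simpa using hP.posSemidef.dotProduct_mulVec_nonneg x
    nlinarith [hσ]
  have hσ0 : (σ:ℝ) ≠ 0 := hσ.ne'
  have hvv : (Matrix.vecMulVec x x).mulVec v = γ • x := by
    ext i
    simp only [Matrix.mulVec, dotProduct, Matrix.vecMulVec_apply,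
      Pi.smul_apply, smul_eq_mul, mul_assoc, ← Finset.mul_sum, ← h3,
      dotProduct]
    ring
  subst hδ hk
  rw [smul_smul]
  set c := e * s⁻¹ with hc
  rw [Matrix.mulVec_smul, dotProduct_smul, smul_dotProduct, smul_eq_mul, smul_eq_mul]
  rw [Matrix.add_mulVec, Matrix.add_mulVec, Matrix.smul_mulVec,
    dotProduct_add, dotProduct_add, dotProduct_smul, h1, h2, hvv,
    dotProduct_smul, h2, smul_eq_mul, smul_eq_mul]
  rw [hc, inv_eq_one_div]
  field_simp
  ring
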